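/- Let 0 < ε ≤ 1/4. There exists a constant c > 0 such that for every T with 0 < T ≤ 1/2 and every real number a, ∫₀^{T/2} s^{-1/4} (-ln s)^{-1/4-ε} (T - s)^{-3/2} e^{-a²/(T-s)} ds ≥ c T^{-3/4} (-ln T)^{-1/4-ε} e^{-2a²/T}. -/

import Mathlib

open MeasureTheory Real Set

set_option maxHeartbeats 1000000 in
theorem stmt_10 (ε : ℝ) (hε : 0 < ε) (hε' : ε ≤ 1/4) :
    ∃ c : ℝ, 0 < c ∧ ∀ T : ℝ, 0 < T → T ≤ 1/2 → ∀ a : ℝ,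
      c * T ^ (-(3/4) : ℝ) * (-Real.log T) ^ (-(1/4) - ε) * Real.exp (-(2*a^2)/T) ≤
        ∫ s in Ioo (0:ℝ) (T/2),
          s ^ (-(1/4) : ℝ) * (-Real.log s) ^ (-(1/4) - ε) *
            (T - s) ^ (-(3/2) : ℝ) * Real.exp (-(a^2)/(T - s)) := by
  refine ⟨1/8, by norm_num, fun T hT hT' a => ?_⟩
  set f : ℝ → ℝ := fun s =>
    s ^ (-(1/4) : ℝ) * (-Real.log s) ^ (-(1/4) - ε) *
      (T - s) ^ (-(3/2) : ℝ) * Real.exp (-(a^2)/(T - s)) with hf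
  have hL : 0 < -Real.log T := by
    have : Real.log T < 0 := Real.log_neg hT (by linarith)
    linarith
  have hLln2 : Real.log 2 ≤ -Real.log T := by
    have := Real.log_le_log hT (by linarith : T ≤ 1/2)
    rw [show (1:ℝ)/2 = 2⁻¹ by norm_num, Real.log_inv] at this
    linarith
  have hln2 : (0:ℝ) < Real.log 2 := Real.log_pos (by norm_num)
  -- nonnegativity of f on (0, T/2)
  have hf0 : ∀ s ∈ Ioo (0:ℝ) (T/2), 0 ≤ f s := by
    intro s hs
    have hs0 : 0 < s := hs.1
    have : 0 ≤ -Real.log s := by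
      have : Real.log s < 0 := Real.log_neg hs0 (by nlinarith [hs.2])
      linarith
    have hTs : 0 < T - s := by nlinarith [hs.2]
    have e1 : (0:ℝ) ≤ s ^ (-(1/4) : ℝ) := (Real.rpow_pos_of_pos hs0 _).le
    have e2 : (0:ℝ) ≤ (-Real.log s) ^ (-(1/4) - ε) := Real.rpow_nonneg this _
    have e3 : (0:ℝ) ≤ (T - s) ^ (-(3/2) : ℝ) := (Real.rpow_pos_of_pos hTs _).le
    have e4 : (0:ℝ) ≤ Real.exp (-(a^2)/(T - s)) := (Real.exp_pos _).le
    exact mul_nonneg (mul_nonneg (mul_nonneg e1 e2) e3) e4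
  -- measurability
  have hrp : ∀ c : ℝ, Measurable (fun x : ℝ => x ^ c) := by
    intro c; fun_prop
  have hmeas : Measurable f := by
    rw [hf]
    refine ((((hrp _).mul ((hrp _).comp Real.measurable_log.neg)).mul
      ((hrp _).comp (measurable_const.sub measurable_id))).mul
      (Real.measurable_exp.comp (measurable_const.div (measurable_const.sub measurable_id))))
  -- integrability on Ioo 0 (T/2)
  have hInt : IntegrableOn f (Ioo 0 (T/2)) := by
    have hgInt : IntegrableOn
        (fun s : ℝ => (Real.log 2) ^ (-(1/4) - ε) * (T/2) ^ (-(3/2):ℝ) * s ^ (-(1/4) : ℝ))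
        (Ioo 0 (T/2)) := by
      apply Integrable.const_mul
      have := intervalIntegral.intervalIntegrable_rpow' (a := 0) (b := T/2) (r := -(1/4)) (by norm_num)
      rw [intervalIntegrable_iff, Set.uIoc_of_le (by linarith : (0:ℝ) ≤ T/2)] at this
      exact this.mono_set Set.Ioo_subset_Ioc_self
    refine MeasureTheory.Integrable.mono hgInt hmeas.aestronglyMeasurable.restrict ?_
    filter_upwards [ae_restrict_mem measurableSet_Ioo] with s hs
    have hs0 : 0 < s := hs.1
    have hs1 : s < T/2 := hs.2
    have hTs : 0 < T - s := by linarith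
    have hls : 0 < -Real.log s := by
      have : Real.log s < 0 := Real.log_neg hs0 (by nlinarith)
      linarith
    rw [Real.norm_eq_abs, Real.norm_eq_abs, abs_of_nonneg (hf0 s hs)]
    have hb1 : (-Real.log s) ^ (-(1/4) - ε) ≤ (Real.log 2) ^ (-(1/4) - ε) := by
      apply Real.rpow_le_rpow_of_nonpos hln2 ?_ (by linarith)
      have : Real.log s ≤ Real.log (1/2) := Real.log_le_log hs0 (by nlinarith)
      rw [show (1:ℝ)/2 = 2⁻¹ by norm_num, Real.log_inv] at this
      linarith
    have hb2 : (T - s) ^ (-(3/2):ℝ) ≤ (T/2) ^ (-(3/2):ℝ) :=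
      Real.rpow_le_rpow_of_nonpos (by linarith) (by linarith) (by norm_num)
    have hb3 : Real.exp (-(a^2)/(T-s)) ≤ 1 := by
      rw [Real.exp_le_one_iff]
      exact div_nonpos_of_nonpos_of_nonneg (neg_nonpos.2 (sq_nonneg a)) hTs.le
    have hs14 : (0:ℝ) ≤ s ^ (-(1/4):ℝ) := (Real.rpow_pos_of_pos hs0 _).le
    have hlog2p : (0:ℝ) ≤ (Real.log 2) ^ (-(1/4) - ε) := (Real.rpow_pos_of_pos hln2 _).le
    have hT2p : (0:ℝ) ≤ (T/2) ^ (-(3/2):ℝ) := (Real.rpow_pos_of_pos (by linarith) _).le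
    have habs : 0 ≤ (Real.log 2) ^ (-(1/4) - ε) * (T/2) ^ (-(3/2):ℝ) * s ^ (-(1/4) : ℝ) :=
      mul_nonneg (mul_nonneg hlog2p hT2p) hs14
    rw [abs_of_nonneg habs]
    have step : f s ≤ s ^ (-(1/4) : ℝ) * (Real.log 2) ^ (-(1/4) - ε) * (T/2) ^ (-(3/2):ℝ) * 1 := by
      refine mul_le_mul (mul_le_mul (mul_le_mul_of_nonneg_left hb1 hs14) hb2
        (Real.rpow_pos_of_pos hTs _).le (mul_nonneg hs14 hlog2p)) hb3
        (Real.exp_pos _).le ?_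
      exact mul_nonneg (mul_nonneg hs14 hlog2p) hT2p
    calc f s ≤ s ^ (-(1/4) : ℝ) * (Real.log 2) ^ (-(1/4) - ε) * (T/2) ^ (-(3/2):ℝ) * 1 := step
      _ = (Real.log 2) ^ (-(1/4) - ε) * (T/2) ^ (-(3/2):ℝ) * s ^ (-(1/4) : ℝ) := by ring
  -- the constant lower bound on (T/4, T/2)
  set g : ℝ := T ^ (-(1/4):ℝ) * (3 * (-Real.log T)) ^ (-(1/4) - ε) * T ^ (-(3/2):ℝ) *
      Real.exp (-(2*a^2)/T) with hg
  have hlow : ∀ s ∈ Ioo (T/4) (T/2), g ≤ f s := by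
    intro s hs
    obtain ⟨hs1, hs2⟩ := hs
    have hs0 : 0 < s := by linarith
    have hTs : 0 < T - s := by linarith
    have hls : 0 < -Real.log s := by
      have : Real.log s < 0 := Real.log_neg hs0 (by nlinarith)
      linarith
    have h1 : T ^ (-(1/4):ℝ) ≤ s ^ (-(1/4):ℝ) :=
      Real.rpow_le_rpow_of_nonpos hs0 (by linarith) (by norm_num)
    have h2 : (3 * (-Real.log T)) ^ (-(1/4) - ε) ≤ (-Real.log s) ^ (-(1/4) - ε) := by
      apply Real.rpow_le_rpow_of_nonpos hls ?_ (by linarith)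
      have hlog4 : Real.log 4 = 2 * Real.log 2 := by
        rw [show (4:ℝ) = 2^2 by norm_num, Real.log_pow]; push_cast; ring
      have h4 : Real.log (T/4) ≤ Real.log s := Real.log_le_log (by linarith) (by linarith)
      rw [Real.log_div (by linarith) (by norm_num)] at h4
      nlinarith [hLln2]
    have h3 : T ^ (-(3/2):ℝ) ≤ (T - s) ^ (-(3/2):ℝ) :=
      Real.rpow_le_rpow_of_nonpos hTs (by linarith) (by norm_num)
    have h4 : Real.exp (-(2*a^2)/T) ≤ Real.exp (-(a^2)/(T-s)) := by
      apply Real.exp_le_exp.2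
      rw [div_le_div_iff₀ hT hTs]
      nlinarith [mul_nonneg (sq_nonneg a) (by linarith : (0:ℝ) ≤ T - 2*s)]
    have hg1 : (0:ℝ) ≤ (3 * (-Real.log T)) ^ (-(1/4) - ε) :=
      (Real.rpow_pos_of_pos (by linarith) _).le
    have hT14 : (0:ℝ) ≤ T ^ (-(1/4):ℝ) := (Real.rpow_pos_of_pos hT _).le
    have hT32 : (0:ℝ) ≤ T ^ (-(3/2):ℝ) := (Real.rpow_pos_of_pos hT _).le
    have hs14 : (0:ℝ) ≤ s ^ (-(1/4):ℝ) := (Real.rpow_pos_of_pos hs0 _).le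
    have hls14 : (0:ℝ) ≤ (-Real.log s) ^ (-(1/4) - ε) := (Real.rpow_pos_of_pos hls _).le
    have hTs32 : (0:ℝ) ≤ (T - s) ^ (-(3/2):ℝ) := (Real.rpow_pos_of_pos hTs _).le
    refine mul_le_mul (mul_le_mul (mul_le_mul h1 h2 hg1 hs14) h3 hT32
      (mul_nonneg hs14 hls14)) h4 (Real.exp_pos _).le
      (mul_nonneg (mul_nonneg hs14 hls14) hTs32)
  -- chain of inequalities
  have step1 : g * (volume (Ioo (T/4) (T/2))).toReal ≤ ∫ s in Ioo (T/4) (T/2), f s :=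
    setIntegral_ge_of_const_le_real measurableSet_Ioo (by simp) hlow
      (hInt.mono_set (fun x hx => ⟨by linarith [hx.1, hT], hx.2⟩))
  have step2 : (∫ s in Ioo (T/4) (T/2), f s) ≤ ∫ s in Ioo (0:ℝ) (T/2), f s := by
    apply setIntegral_mono_set hInt
    · filter_upwards [ae_restrict_mem measurableSet_Ioo] with s hs using hf0 s hs
    · exact Filter.Eventually.of_forall (fun x hx => ⟨by linarith [hx.1, hT], hx.2⟩)
  have hvol : (volume (Ioo (T/4) (T/2))).toReal = T/4 := by
    rw [Real.volume_Ioo, ENNReal.toReal_ofReal (by linarith)]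
    ring
  rw [hvol] at step1
  refine le_trans ?_ (le_trans step1 step2)
  -- arithmetic: 1/8 * T^(-3/4) * L^(-1/4-ε) * E ≤ g * (T/4)
  have hE : 0 < Real.exp (-(2*a^2)/T) := Real.exp_pos _
  have h3pow : (3:ℝ) ^ (-(1/4) - ε) * (-Real.log T) ^ (-(1/4) - ε)
      = (3 * (-Real.log T)) ^ (-(1/4) - ε) :=
    (Real.mul_rpow (by norm_num) hL.le).symm
  have hTpow : T ^ (-(1/4):ℝ) * T ^ (-(3/2):ℝ) * T = T ^ (-(3/4):ℝ) := by
    nth_rewrite 3 [← Real.rpow_one T]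
    rw [← Real.rpow_add hT, ← Real.rpow_add hT]
    norm_num
  have h3half : (1:ℝ)/2 ≤ (3:ℝ) ^ (-(1/4) - ε) := by
    have h1 : ((3:ℝ) ^ (-((1:ℝ)/2))) ≤ (3:ℝ) ^ (-(1/4) - ε) :=
      Real.rpow_le_rpow_of_exponent_le (by norm_num) (by linarith)
    refine le_trans ?_ h1
    have hsq : (3:ℝ) ^ ((1:ℝ)/2) = Real.sqrt 3 := (Real.sqrt_eq_rpow 3).symm
    have hs3 : Real.sqrt 3 ≤ 2 := by
      have h4 : Real.sqrt 4 = 2 := by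
        rw [show (4:ℝ) = 2^2 by norm_num, Real.sqrt_sq (by norm_num)]
      calc Real.sqrt 3 ≤ Real.sqrt 4 := Real.sqrt_le_sqrt (by norm_num)
        _ = 2 := h4
    have hs3pos : 0 < Real.sqrt 3 := Real.sqrt_pos.2 (by norm_num)
    rw [Real.rpow_neg (by norm_num), hsq, show (1:ℝ)/2 = (2:ℝ)⁻¹ by norm_num]
    exact inv_anti₀ hs3pos hs3
  have key : g * (T/4) =
      (1/4) * ((3:ℝ) ^ (-(1/4) - ε)) * (T ^ (-(3/4):ℝ)) * ((-Real.log T) ^ (-(1/4) - ε)) *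
        Real.exp (-(2*a^2)/T) := by
    rw [hg, ← h3pow, ← hTpow]; ring
  have hTp : (0:ℝ) < T ^ (-(3/4):ℝ) := Real.rpow_pos_of_pos hT _
  have hLp : (0:ℝ) < (-Real.log T) ^ (-(1/4) - ε) := Real.rpow_pos_of_pos hL _
  calc (1:ℝ)/8 * T ^ (-(3/4):ℝ) * (-Real.log T) ^ (-(1/4) - ε) * Real.exp (-(2*a^2)/T)
      ≤ (1/4) * ((3:ℝ) ^ (-(1/4) - ε)) * (T ^ (-(3/4):ℝ)) * ((-Real.log T) ^ (-(1/4) - ε)) *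
        Real.exp (-(2*a^2)/T) := by
        nlinarith [mul_pos (mul_pos hTp hLp) hE]
    _ = g * (T/4) := key.symm
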